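/- Let X be a nonnegative random variable with finite second moment satisfying 2(E[X])^2 ≤ E[X^2]. Then for every t > 0, log E[e^{-tX}] ≤ Var(X)·t²/2 − E[X]·t. -/

import Mathlib

open MeasureTheory ProbabilityTheory Real

/-- Helper: if `F` has derivative `F'` everywhere and `F' ≥ 0` on `[0,∞)`,
then `F` is monotone on `[0,∞)`. -/
lemma aux_mono_ici {F F' : ℝ → ℝ} (hd : ∀ x, HasDerivAt F (F' x) x)
    (h' : ∀ x, 0 ≤ x → 0 ≤ F' x) {a b : ℝ} (ha : 0 ≤ a) (hab : a ≤ b) :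
    F a ≤ F b := by
  have hmono : MonotoneOn F (Set.Ici (0:ℝ)) := by
    apply monotoneOn_of_deriv_nonneg (convex_Ici 0)
    · exact fun x _ => (hd x).continuousAt.continuousWithinAt
    · exact fun x _ => (hd x).differentiableAt.differentiableWithinAt
    · intro x hx
      rw [interior_Ici] at hx
      rw [(hd x).deriv]
      exact h' x hx.le
  exact hmono ha (le_trans ha hab) hab

/-- `exp x ≥ 1 + x + x²/2` for `x ≥ 0`. -/
lemma aux_quad_le_exp {x : ℝ} (hx : 0 ≤ x) : 1 + x + x^2/2 ≤ Real.exp x := by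
  have := aux_mono_ici (F := fun x => Real.exp x - 1 - x - x^2/2)
    (F' := fun x => Real.exp x - 1 - x)
    (fun x => by
      have h1 := (((Real.hasDerivAt_exp x).sub_const 1).sub (hasDerivAt_id x)).sub
          ((hasDerivAt_pow 2 x).div_const 2)
      refine h1.congr_deriv ?_
      simp)
    (fun x hx => by
      have := Real.add_one_le_exp x
      show (0:ℝ) ≤ Real.exp x - 1 - x
      linarith)
    le_rfl hx
  simp only [Real.exp_zero] at this
  norm_num at this
  linarith

/-- `exp (-x) ≤ 1 - x + x²/2` for `x ≥ 0`. -/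
lemma aux_exp_le_quad {x : ℝ} (hx : 0 ≤ x) : Real.exp (-x) ≤ 1 - x + x^2/2 := by
  have := aux_mono_ici (F := fun x => 1 - x + x^2/2 - Real.exp (-x))
    (F' := fun x => -1 + x + Real.exp (-x))
    (fun x => by
      have h1 := (((hasDerivAt_const x (1:ℝ)).sub (hasDerivAt_id x)).add
          ((hasDerivAt_pow 2 x).div_const 2)).sub
          (((Real.hasDerivAt_exp (-x)).comp x ((hasDerivAt_id x).neg)))
      refine h1.congr_deriv ?_
      simp)
    (fun x hx => by
      have := Real.add_one_le_exp (-x)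
      show (0:ℝ) ≤ -1 + x + Real.exp (-x)
      linarith)
    le_rfl hx
  simp only [neg_zero, Real.exp_zero] at this
  norm_num at this
  linarith

/-- `(x-1)eˣ + 1 ≥ 0` for `x ≥ 0`. -/
lemma aux_psi' {x : ℝ} (hx : 0 ≤ x) : 0 ≤ (x - 1) * Real.exp x + 1 := by
  have := aux_mono_ici (F := fun x => (x - 1) * Real.exp x + 1)
    (F' := fun x => x * Real.exp x)
    (fun x => by
      have h1 := (((hasDerivAt_id x).sub_const 1).mul (Real.hasDerivAt_exp x)).add_const 1
      refine h1.congr_deriv ?_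
      simp; ring)
    (fun x hx => mul_nonneg hx (Real.exp_pos x).le)
    le_rfl hx
  simp only [Real.exp_zero] at this
  norm_num at this
  linarith

/-- `(x-2)eˣ + x + 2 ≥ 0` for `x ≥ 0`. -/
lemma aux_psi {x : ℝ} (hx : 0 ≤ x) : 0 ≤ (x - 2) * Real.exp x + x + 2 := by
  have := aux_mono_ici (F := fun x => (x - 2) * Real.exp x + x + 2)
    (F' := fun x => (x - 1) * Real.exp x + 1)
    (fun x => by
      have h1 := ((((hasDerivAt_id x).sub_const 2).mul (Real.hasDerivAt_exp x)).add
        (hasDerivAt_id x)).add_const 2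
      refine h1.congr_deriv ?_
      simp; ring)
    (fun x hx => aux_psi' hx)
    le_rfl hx
  simp only [Real.exp_zero] at this
  norm_num at this
  linarith

/-- Monotonicity of `(eˣ - 1 - x)/x²` in cross-multiplied form:
for `w ≤ u`, `0 ≤ u` : `(eʷ - 1 - w)u² ≤ (eᵘ - 1 - u)w²`. -/
lemma aux_ratio_mono {w u : ℝ} (hu : 0 ≤ u) (hwu : w ≤ u) :
    (Real.exp w - 1 - w) * u^2 ≤ (Real.exp u - 1 - u) * w^2 := by
  have hfu : u^2/2 ≤ Real.exp u - 1 - u := by have := aux_quad_le_exp hu; linarith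
  rcases le_or_gt w 0 with hw | hw
  · -- negative branch : exp w ≤ 1 + w + w²/2
    have hfw : Real.exp w - 1 - w ≤ w^2/2 := by
      have := aux_exp_le_quad (x := -w) (by linarith)
      rw [neg_neg] at this
      nlinarith [this]
    have h0w : 0 ≤ Real.exp w - 1 - w := by
      have := Real.add_one_le_exp w; linarith
    nlinarith [mul_le_mul_of_nonneg_right hfw (sq_nonneg u),
      mul_le_mul_of_nonneg_right hfu (sq_nonneg w)]
  · -- positive branch : ratio monotone on (0, ∞)
    have hmono : MonotoneOn (fun x => (Real.exp x - 1 - x)/x^2) (Set.Ioi (0:ℝ)) := by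
      apply monotoneOn_of_deriv_nonneg (convex_Ioi 0)
      · apply ContinuousOn.div
        · fun_prop
        · fun_prop
        · intro x hx
          exact pow_ne_zero 2 (ne_of_gt hx)
      · rw [interior_Ioi]
        intro x hx
        apply DifferentiableAt.differentiableWithinAt
        exact DifferentiableAt.div (by fun_prop) (by fun_prop) (pow_ne_zero 2 (ne_of_gt hx))
      · rw [interior_Ioi]
        intro x hx
        have hnum : HasDerivAt (fun x : ℝ => Real.exp x - 1 - x) (Real.exp x - 1) x := by
          exact ((Real.hasDerivAt_exp x).sub_const 1).sub (hasDerivAt_id x)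
        have hden : HasDerivAt (fun x : ℝ => x^2) (2*x) x := by
          have := hasDerivAt_pow 2 x
          refine this.congr_deriv ?_
          simp
        have hdiv := hnum.div hden (pow_ne_zero 2 (ne_of_gt hx))
        rw [show deriv (fun x => (Real.exp x - 1 - x) / x^2) x = _ from hdiv.deriv]
        apply div_nonneg
        · have hkey := aux_psi hx.le
          have : (Real.exp x - 1) * x^2 - (Real.exp x - 1 - x) * (2*x)
              = x * ((x - 2) * Real.exp x + x + 2) := by ring
          rw [this]
          exact mul_nonneg hx.le hkey
        · exact sq_nonneg _
    have := hmono (Set.mem_Ioi.mpr hw) (Set.mem_Ioi.mpr (lt_of_lt_of_le hw hwu)) hwu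
    have hw2 : (0:ℝ) < w^2 := pow_pos hw 2
    have hu2 : (0:ℝ) < u^2 := pow_pos (lt_of_lt_of_le hw hwu) 2
    rw [div_le_div_iff₀ hw2 hu2] at this
    linarith

/-- Pointwise quadratic majorant of `exp(-y)` on `y ≥ 0`, tangent at `y = u` and through `y = 0`. -/
lemma aux_pointwise {u y : ℝ} (hu : 0 ≤ u) (hy : 0 ≤ y) :
    u^2 * Real.exp (-y) ≤ u^2 * Real.exp (-u) * (1 + u - y)
      + (1 - (1+u)*Real.exp (-u)) * (y - u)^2 := by
  have hL := aux_ratio_mono (w := u - y) (u := u) hu (by linarith)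
  rw [show u - y = u + (-y) by ring, Real.exp_add] at hL
  have hAC : Real.exp (-u) * Real.exp u = 1 := by
    rw [← Real.exp_add]; simp
  have h2 := mul_le_mul_of_nonneg_left hL (Real.exp_pos (-u)).le
  set A := Real.exp (-u)
  set B := Real.exp (-y)
  set C := Real.exp u
  have key : u^2*B - (u^2*A*(1+u-y) + (1 - (1+u)*A)*(y-u)^2)
      = A*((C*B - 1 - (u + -y))*u^2) - A*((C-1-u)*(u-y)^2)
        + (A*C - 1)*((u-y)^2 - B*u^2) := by ring
  rw [hAC] at key
  simp only [sub_self, zero_mul, add_zero] at key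
  linarith [h2, key.le, key.ge]

/-- Kearns–Saul-type inequality for the "Bernoulli" generating function, `p ≤ 1/2`, `u ≥ 0`. -/
lemma aux_bernoulli {p u : ℝ} (hp : 0 < p) (hp2 : p ≤ 1/2) (hu : 0 ≤ u) :
    1 - p + p * Real.exp (-u) ≤ Real.exp (p*(1-p)*u^2/2 - p*u) := by
  set A : ℝ → ℝ := fun v => 1 - p + p * Real.exp (-v) with hA
  have hApos : ∀ v, 0 < A v := fun v => by
    have := Real.exp_pos (-v)
    simp only [hA]
    nlinarith
  have hA' : ∀ v, HasDerivAt A (-(p * Real.exp (-v))) v := by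
    intro v
    have h1 := (((Real.hasDerivAt_exp (-v)).comp v ((hasDerivAt_id v).neg)).const_mul p).const_add (1-p)
    refine h1.congr_deriv ?_
    all_goals simp
    all_goals ring
  have hN : ∀ v, HasDerivAt (fun v => p * Real.exp (-v)) (-(p * Real.exp (-v))) v := by
    intro v
    have h1 := ((Real.hasDerivAt_exp (-v)).comp v ((hasDerivAt_id v).neg)).const_mul p
    refine h1.congr_deriv ?_
    all_goals simp
    all_goals ring
  set F' : ℝ → ℝ := fun v => p*(1-p)*v - p + p * Real.exp (-v) / A v with hF'
  set F'' : ℝ → ℝ := fun v =>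
    p*(1-p) + (-(p * Real.exp (-v)) * A v - p * Real.exp (-v) * -(p * Real.exp (-v))) / (A v)^2
    with hF''
  have hd2 : ∀ v, HasDerivAt F' (F'' v) v := by
    intro v
    have h1 := (((hasDerivAt_id v).const_mul (p*(1-p))).sub_const p).add
      ((hN v).div (hA' v) (hApos v).ne')
    refine h1.congr_deriv ?_
    all_goals simp [hF', hF'']
    all_goals ring
  have hd1 : ∀ v, HasDerivAt (fun v => p*(1-p)*v^2/2 - p*v - Real.log (A v)) (F' v) v := by
    intro v
    have h1 := ((((hasDerivAt_pow 2 v).const_mul (p*(1-p))).div_const 2).sub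
      ((hasDerivAt_id v).const_mul p)).sub ((hA' v).log (hApos v).ne')
    refine h1.congr_deriv ?_
    all_goals simp [hF']
    all_goals ring
  have h2nn : ∀ v, 0 ≤ v → 0 ≤ F'' v := by
    intro v hv
    have hx1 : Real.exp (-v) ≤ 1 := Real.exp_le_one_iff.mpr (by linarith)
    have hx0 : 0 < Real.exp (-v) := Real.exp_pos _
    set x := Real.exp (-v)
    have hAx : A v = 1 - p + p * x := rfl
    have hsq : x ≤ (A v)^2 := by
      rw [hAx]
      nlinarith [mul_nonneg (mul_nonneg hp.le hp.le) (sub_nonneg.mpr hx1),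
        sq_nonneg (1-x)]
    have heq : F'' v = p*(1-p)*((A v)^2 - x) / (A v)^2 + (p*(1-p) - p*(1-p)) := by
      rw [hF'']
      have hAne : (A v)^2 ≠ 0 := (pow_pos (hApos v) 2).ne'
      show p*(1-p) + (-(p*x)*A v - p*x*-(p*x))/(A v)^2 = _
      have hA0 : 1 - p + p * x ≠ 0 := hAx ▸ (hApos v).ne'
      rw [hAx] at hAne ⊢
      field_simp
      ring
    rw [heq]
    simp only [sub_self, add_zero]
    apply div_nonneg
    · apply mul_nonneg (by nlinarith) (by linarith)
    · exact sq_nonneg _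
  have h1nn : ∀ v, 0 ≤ v → 0 ≤ F' v := by
    intro v hv
    have h0 : F' 0 = 0 := by
      simp [hF', hA]
    have := aux_mono_ici hd2 h2nn le_rfl hv
    rw [h0] at this
    exact this
  have hFnn : 0 ≤ p*(1-p)*u^2/2 - p*u - Real.log (A u) := by
    have h0 : p*(1-p)*(0:ℝ)^2/2 - p*0 - Real.log (A 0) = 0 := by
      simp [hA]
    have := aux_mono_ici hd1 h1nn le_rfl hu
    rw [h0] at this
    exact this
  have hlog : Real.log (A u) ≤ p*(1-p)*u^2/2 - p*u := by linarith
  calc A u = Real.exp (Real.log (A u)) := (Real.exp_log (hApos u)).symm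
  _ ≤ _ := Real.exp_le_exp.mpr hlog

theorem stmt_0 {Ω : Type*} [MeasurableSpace Ω] (μ : Measure Ω) [IsProbabilityMeasure μ]
    (X : Ω → ℝ) (hXmeas : AEMeasurable X μ)
    (hX0 : ∀ᵐ ω ∂μ, 0 ≤ X ω)
    (hX2 : MemLp X 2 μ)
    (hmom : 2 * (∫ ω, X ω ∂μ) ^ 2 ≤ ∫ ω, (X ω) ^ 2 ∂μ) :
    ∀ t : ℝ, 0 < t →
      Real.log (∫ ω, Real.exp (-t * X ω) ∂μ) ≤
        variance X μ * t ^ 2 / 2 - (∫ ω, X ω ∂μ) * t := by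
  have intX : Integrable X μ := hX2.integrable (by norm_num)
  have intX2 : Integrable (fun ω => (X ω)^2) μ := by
    have := hX2.integrable_sq
    simpa [Pi.pow_apply] using this
  set m := ∫ ω, X ω ∂μ with hm_def
  set s := ∫ ω, (X ω)^2 ∂μ with hs_def
  have hm0 : 0 ≤ m := integral_nonneg_of_ae hX0
  have hvar : variance X μ = s - m^2 := by
    rw [variance_eq_sub hX2]
    simp only [Pi.pow_apply]
    rfl
  intro t ht
  have intExp : Integrable (fun ω => Real.exp (-t * X ω)) μ := by
    apply Integrable.mono' (integrable_const (1:ℝ))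
    · exact (Real.measurable_exp.comp_aemeasurable (hXmeas.const_mul (-t))).aestronglyMeasurable
    · filter_upwards [hX0] with ω h0
      rw [Real.norm_eq_abs, abs_of_pos (Real.exp_pos _)]
      apply Real.exp_le_one_iff.mpr
      nlinarith
  have hE0 : 0 < ∫ ω, Real.exp (-t * X ω) ∂μ := by
    have hmgf : (0:ℝ) < mgf X μ (-t) :=
      mgf_pos' (IsProbabilityMeasure.ne_zero μ) (by simpa using intExp)
    simpa [mgf] using hmgf
  rcases eq_or_lt_of_le hm0 with hm | hm
  · -- degenerate case : mean zero, trivial bound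
    have hE1 : (∫ ω, Real.exp (-t * X ω) ∂μ) ≤ 1 := by
      calc (∫ ω, Real.exp (-t * X ω) ∂μ) ≤ ∫ _, (1:ℝ) ∂μ := by
            apply integral_mono_ae intExp (integrable_const 1)
            filter_upwards [hX0] with ω h0
            apply Real.exp_le_one_iff.mpr
            nlinarith
      _ = 1 := by simp
    have hlog : Real.log (∫ ω, Real.exp (-t * X ω) ∂μ) ≤ 0 := Real.log_nonpos hE0.le hE1
    have hv := variance_nonneg X μ
    nlinarith [sq_nonneg t]
  · -- main case : positive mean
    have hs0 : 0 < s := by nlinarith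
    set p := m^2/s with hp_def
    set u := t*s/m with hu_def
    have hp : 0 < p := by rw [hp_def]; positivity
    have hp2 : p ≤ 1/2 := by
      rw [hp_def, div_le_iff₀ hs0]
      nlinarith
    have hu : 0 < u := by
      rw [hu_def]
      positivity
    set c0 := u^2*Real.exp (-u)*(1+u) + (1 - (1+u)*Real.exp (-u))*u^2 with hc0
    set c1 := -(u^2*Real.exp (-u)*t) - (1 - (1+u)*Real.exp (-u))*(2*t*u) with hc1
    set c2 := (1 - (1+u)*Real.exp (-u))*t^2 with hc2
    have hpt : ∀ᵐ ω ∂μ, u^2 * Real.exp (-t * X ω) ≤ c0 + c1 * X ω + c2 * (X ω)^2 := by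
      filter_upwards [hX0] with ω h0
      have hyp : 0 ≤ t * X ω := mul_nonneg ht.le h0
      have hkey := aux_pointwise hu.le hyp
      have hexpand : c0 + c1 * X ω + c2 * (X ω)^2
          = u^2 * Real.exp (-u) * (1 + u - t * X ω)
            + (1 - (1+u)*Real.exp (-u)) * (t * X ω - u)^2 := by
        rw [hc0, hc1, hc2]; ring
      rw [hexpand, neg_mul]
      exact hkey
    have intRHS : Integrable (fun ω => c0 + c1 * X ω + c2 * (X ω)^2) μ :=
      ((integrable_const c0).add (intX.const_mul c1)).add (intX2.const_mul c2)
    have hIle := integral_mono_ae (intExp.const_mul (u^2)) intRHS hpt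
    have hLHSeq : (∫ ω, u^2 * Real.exp (-t * X ω) ∂μ)
        = u^2 * ∫ ω, Real.exp (-t * X ω) ∂μ := integral_const_mul _ _
    have intAB : Integrable (fun ω => c0 + c1 * X ω) μ :=
      (integrable_const c0).add (intX.const_mul c1)
    have hRHSeq : (∫ ω, (c0 + c1 * X ω + c2 * (X ω)^2) ∂μ) = c0 + c1 * m + c2 * s := by
      rw [integral_add intAB (intX2.const_mul c2),
        integral_add (integrable_const c0) (intX.const_mul c1),
        integral_const, integral_const_mul, integral_const_mul]
      simp [hm_def, hs_def]
    rw [hLHSeq, hRHSeq] at hIle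
    have halg : c0 + c1 * m + c2 * s = u^2 * (1 - p + p * Real.exp (-u)) := by
      rw [hc0, hc1, hc2, hp_def, hu_def]
      field_simp
      ring
    rw [halg] at hIle
    have hEle : (∫ ω, Real.exp (-t * X ω) ∂μ) ≤ 1 - p + p * Real.exp (-u) :=
      le_of_mul_le_mul_left hIle (pow_pos hu 2)
    have hB := aux_bernoulli hp hp2 hu.le
    have hexparg : p*(1-p)*u^2/2 - p*u = (s - m^2)*t^2/2 - m*t := by
      rw [hp_def, hu_def]
      field_simp
    rw [hvar, Real.log_le_iff_le_exp hE0, ← hexparg]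
    exact hEle.trans hB
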